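/- Let H be a complex Hilbert space and A a bounded normal operator on H whose spectrum contains no negative real number. Let I be a countable index set, let g : I → H be a Bessel family (there exists C_G > 0 with ∑_{i∈I} |⟨f, g_i⟩|² ≤ C_G‖f‖² for all f ∈ H), and let L > 0. Then the system {A^t g_i : i ∈ I, t ∈ [0, L]} is Bessel: there exists C > 0 such that ∑_{i∈I} ∫₀ᴸ |⟨f, A^t g_i⟩|² dt ≤ C‖f‖² for all f ∈ H. -/

import Mathlib

open scoped InnerProductSpace
open MeasureTheory Set

/-- If `A` is a bounded normal operator whose spectrum contains no negative real number and
`(gᵢ)` is a Bessel family, then the semi-continuous system `{A^t gᵢ : i ∈ I, t ∈ [0,L]}`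
is Bessel. -/
theorem semicontinuous_system_bessel_of_bessel
    {H : Type*} [NormedAddCommGroup H] [InnerProductSpace ℂ H] [CompleteSpace H]
    (A : H →L[ℂ] H) (hA : IsStarNormal A)
    (hspec : ∀ z ∈ spectrum ℂ A, 0 ≤ z.re ∨ z.im ≠ 0)
    {I : Type*} [Countable I] (g : I → H)
    (CG : ℝ) (hCG : 0 < CG)
    (hbessel : ∀ f : H, ∑' i : I, ‖⟪f, g i⟫_ℂ‖ ^ 2 ≤ CG * ‖f‖ ^ 2)
    (L : ℝ) (hL : 0 < L) :
    ∃ C : ℝ, 0 < C ∧ ∀ f : H,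
      ∑' i : I, ∫ t in (0 : ℝ)..L, ‖⟪f, (cfc (fun z : ℂ => z ^ (t : ℂ)) A) (g i)⟫_ℂ‖ ^ 2
        ≤ C * ‖f‖ ^ 2 := by
  rcases subsingleton_or_nontrivial H with hH | hH
  · refine ⟨1, one_pos, fun f => ?_⟩
    have hz : ∀ (i : I) (t : ℝ), ⟪f, (cfc (fun z : ℂ => z ^ (t : ℂ)) A) (g i)⟫_ℂ = 0 := by
      intro i t
      rw [Subsingleton.elim ((cfc (fun z : ℂ => z ^ (t : ℂ)) A) (g i)) 0, inner_zero_right]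
    simp only [hz, norm_zero]
    norm_num
  -- the uniform norm bound
  set M : ℝ := (max 1 ‖A‖) ^ L with hMdef
  have hM1 : (1 : ℝ) ≤ M := Real.one_le_rpow (le_max_left _ _) hL.le
  have hM0 : (0 : ℝ) < M := lt_of_lt_of_le one_pos hM1
  -- continuity of z ^ t for fixed t > 0 on the spectrum
  have hconton : ∀ t : ℝ, 0 < t → ContinuousOn (fun z : ℂ => z ^ (t : ℂ)) (spectrum ℂ A) := by
    intro t ht z hz
    refine (Complex.continuousAt_cpow_const_of_re_pos (hspec z hz) ?_).continuousWithinAt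
    simpa using ht
  -- joint continuity
  have hcont : Continuous (fun p : (Ioi (0:ℝ)) × (spectrum ℂ A) =>
      (p.2 : ℂ) ^ (((p.1 : ℝ) : ℂ))) := by
    rw [continuous_iff_continuousAt]
    intro p
    have h1 : ContinuousAt (fun x : ℂ × ℂ => x.1 ^ x.2) ((p.2 : ℂ), (((p.1 : ℝ)) : ℂ)) := by
      refine Complex.continuousAt_cpow_of_re_pos (hspec _ p.2.2) ?_
      have ht : (0:ℝ) < (p.1 : ℝ) := p.1.2
      simpa using ht
    have h2 : Continuous (fun p : (Ioi (0:ℝ)) × (spectrum ℂ A) =>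
        (((p.2 : ℂ)), (((p.1 : ℝ)) : ℂ))) := by fun_prop
    have h3 : ContinuousAt ((fun x : ℂ × ℂ => x.1 ^ x.2) ∘
        (fun q : (Ioi (0:ℝ)) × (spectrum ℂ A) => (((q.2 : ℂ)), (((q.1 : ℝ)) : ℂ)))) p :=
      ContinuousAt.comp h1 h2.continuousAt
    exact h3
  set Ψ : C((Ioi (0:ℝ)) × (spectrum ℂ A), ℂ) := ⟨_, hcont⟩ with hΨdef
  set Φ : ℝ → (H →L[ℂ] H) := fun t => cfc (fun z : ℂ => z ^ (t : ℂ)) A with hΦdef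
  have hΦeq : ∀ t : (Ioi (0:ℝ)), Φ (t : ℝ) = cfcHom hA (Ψ.curry t) := by
    intro t
    show cfc (fun z : ℂ => z ^ (((t : ℝ)) : ℂ)) A = _
    rw [cfc_apply (ha := hA) (hf := hconton _ t.2)]
    exact congrArg _ (by ext z; rfl)
  have hΦcont : ContinuousOn Φ (Ioi (0:ℝ)) := by
    rw [continuousOn_iff_continuous_restrict]
    have : (Ioi (0:ℝ)).domRestrict Φ = fun t : (Ioi (0:ℝ)) => cfcHom hA (Ψ.curry t) := by
      funext t; exact hΦeq t
    rw [this]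
    exact (cfcHom_continuous hA).comp Ψ.curry.continuous
  -- the uniform norm bound
  have hnorm : ∀ t ∈ Ioc (0:ℝ) L, ‖Φ t‖ ≤ M := by
    intro t ht
    refine norm_cfc_le hM0.le fun z hz => ?_
    rcases eq_or_ne z 0 with rfl | hz0
    · rw [Complex.zero_cpow (by exact_mod_cast ht.1.ne')]
      simpa using hM0.le
    · rw [Complex.norm_cpow_of_ne_zero hz0]
      simp only [Complex.ofReal_re, Complex.ofReal_im, mul_zero, Real.exp_zero, div_one]
      calc ‖z‖ ^ t ≤ (max 1 ‖A‖) ^ t := by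
            refine Real.rpow_le_rpow (norm_nonneg z) ?_ ht.1.le
            exact le_trans (spectrum.norm_le_norm_of_mem hz) (le_max_right _ _)
        _ ≤ M := Real.rpow_le_rpow_of_exponent_le (le_max_left _ _) ht.2
  refine ⟨CG * M ^ 2 * L, by positivity, fun f => ?_⟩
  set F : I → ℝ → ℝ := fun i t => ‖⟪f, Φ t (g i)⟫_ℂ‖ ^ 2 with hFdef
  have hFnonneg : ∀ i t, 0 ≤ F i t := fun i t => by positivity
  -- continuity of each F i on (0, ∞)
  have hFcont : ∀ i, ContinuousOn (F i) (Ioi (0:ℝ)) := by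
    intro i
    refine ContinuousOn.pow (ContinuousOn.norm ?_) 2
    exact ContinuousOn.inner continuousOn_const
      ((ContinuousLinearMap.apply ℂ H (g i)).continuous.comp_continuousOn hΦcont)
  have hFcont' : ∀ i, ContinuousOn (F i) (Ioc (0:ℝ) L) :=
    fun i => (hFcont i).mono Ioc_subset_Ioi_self
  have hFmeas : ∀ i, AEMeasurable (fun t => ENNReal.ofReal (F i t))
      (volume.restrict (Ioc (0:ℝ) L)) := by
    intro i
    exact ((hFcont' i).aemeasurable measurableSet_Ioc).ennreal_ofReal
  -- integrability of each F i on (0, L]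
  have hFint : ∀ i, IntegrableOn (F i) (Ioc (0:ℝ) L) := by
    intro i
    refine Integrable.mono' (g := fun _ => (M * ‖f‖ * ‖g i‖) ^ 2)
      (integrableOn_const measure_Ioc_lt_top.ne)
      ((hFcont' i).aestronglyMeasurable measurableSet_Ioc) ?_
    refine (ae_restrict_iff' measurableSet_Ioc).2 (Filter.Eventually.of_forall fun t ht => ?_)
    rw [Real.norm_eq_abs, abs_of_nonneg (hFnonneg i t)]
    have h1 : ‖⟪f, Φ t (g i)⟫_ℂ‖ ≤ M * ‖f‖ * ‖g i‖ := by
      calc ‖⟪f, Φ t (g i)⟫_ℂ‖ ≤ ‖f‖ * ‖Φ t (g i)‖ := norm_inner_le_norm _ _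
        _ ≤ ‖f‖ * (‖Φ t‖ * ‖g i‖) := by
            gcongr; exact (Φ t).le_opNorm (g i)
        _ ≤ ‖f‖ * (M * ‖g i‖) := by gcongr; exact hnorm t ht
        _ = M * ‖f‖ * ‖g i‖ := by ring
    calc F i t = ‖⟪f, Φ t (g i)⟫_ℂ‖ ^ 2 := rfl
      _ ≤ (M * ‖f‖ * ‖g i‖) ^ 2 := by
          exact pow_le_pow_left₀ (norm_nonneg _) h1 2
  have hIeq : ∀ i, (∫ t in (0:ℝ)..L, F i t) = ∫ t in Ioc (0:ℝ) L, F i t := by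
    intro i; rw [intervalIntegral.integral_of_le hL.le]
  have hInonneg : ∀ i, 0 ≤ ∫ t in (0:ℝ)..L, F i t := by
    intro i
    exact intervalIntegral.integral_nonneg hL.le (fun t _ => hFnonneg i t)
  have hkey : ∀ i, ENNReal.ofReal (∫ t in (0:ℝ)..L, F i t)
      = ∫⁻ t in Ioc (0:ℝ) L, ENNReal.ofReal (F i t) := by
    intro i
    rw [hIeq i]
    exact ofReal_integral_eq_lintegral_ofReal (hFint i)
      ((ae_restrict_iff' measurableSet_Ioc).2 (Filter.Eventually.of_forall fun t _ => hFnonneg i t))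
  by_cases hs : Summable fun i => ∫ t in (0:ℝ)..L, F i t
  case neg =>
    rw [tsum_eq_zero_of_not_summable hs]
    positivity
  -- main case
  have hofsum : ENNReal.ofReal (∑' i, ∫ t in (0:ℝ)..L, F i t)
      = ∑' i, ∫⁻ t in Ioc (0:ℝ) L, ENNReal.ofReal (F i t) := by
    rw [ENNReal.ofReal_tsum_of_nonneg hInonneg hs]
    exact tsum_congr hkey
  have hswap : (∑' i, ∫⁻ t in Ioc (0:ℝ) L, ENNReal.ofReal (F i t))
      = ∫⁻ t in Ioc (0:ℝ) L, ∑' i, ENNReal.ofReal (F i t) :=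
    (lintegral_tsum hFmeas).symm
  have hfin : (∫⁻ t in Ioc (0:ℝ) L, ∑' i, ENNReal.ofReal (F i t)) ≠ ⊤ := by
    rw [← hswap, ← hofsum]; exact ENNReal.ofReal_ne_top
  have hae : ∀ᵐ t ∂(volume.restrict (Ioc (0:ℝ) L)),
      (∑' i, ENNReal.ofReal (F i t)) < ⊤ :=
    ae_lt_top' (AEMeasurable.ennreal_tsum hFmeas) hfin
  have hbd : (∫⁻ t in Ioc (0:ℝ) L, ∑' i, ENNReal.ofReal (F i t))
      ≤ ENNReal.ofReal (CG * M ^ 2 * ‖f‖ ^ 2) * ENNReal.ofReal L := by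
    have hmono : ∀ᵐ t ∂(volume.restrict (Ioc (0:ℝ) L)),
        (∑' i, ENNReal.ofReal (F i t)) ≤ ENNReal.ofReal (CG * M ^ 2 * ‖f‖ ^ 2) := by
      filter_upwards [hae, ae_restrict_mem measurableSet_Ioc] with t htop ht
      have hsumm : Summable fun i => F i t := by
        have := ENNReal.summable_toReal htop.ne
        simpa only [ENNReal.toReal_ofReal (hFnonneg _ t)] using this
      rw [← ENNReal.ofReal_tsum_of_nonneg (fun i => hFnonneg i t) hsumm]
      refine ENNReal.ofReal_le_ofReal ?_
      have heq : ∀ i, F i t = ‖⟪ContinuousLinearMap.adjoint (Φ t) f, g i⟫_ℂ‖ ^ 2 := by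
        intro i
        rw [hFdef]
        simp only
        rw [ContinuousLinearMap.adjoint_inner_left]
      calc (∑' i, F i t) = ∑' i, ‖⟪ContinuousLinearMap.adjoint (Φ t) f, g i⟫_ℂ‖ ^ 2 :=
            tsum_congr heq
        _ ≤ CG * ‖ContinuousLinearMap.adjoint (Φ t) f‖ ^ 2 := hbessel _
        _ ≤ CG * (M * ‖f‖) ^ 2 := by
            have h1 : ‖ContinuousLinearMap.adjoint (Φ t) f‖ ≤ M * ‖f‖ := by
              calc ‖ContinuousLinearMap.adjoint (Φ t) f‖
                  ≤ ‖ContinuousLinearMap.adjoint (Φ t)‖ * ‖f‖ :=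
                    (ContinuousLinearMap.adjoint (Φ t)).le_opNorm f
                _ = ‖Φ t‖ * ‖f‖ := by
                    rw [LinearIsometryEquiv.norm_map]
                _ ≤ M * ‖f‖ := by gcongr; exact hnorm t ht
            have h0 := norm_nonneg (ContinuousLinearMap.adjoint (Φ t) f)
            exact mul_le_mul_of_nonneg_left (pow_le_pow_left₀ h0 h1 2) hCG.le
        _ = CG * M ^ 2 * ‖f‖ ^ 2 := by ring
    calc (∫⁻ t in Ioc (0:ℝ) L, ∑' i, ENNReal.ofReal (F i t))
        ≤ ∫⁻ _ in Ioc (0:ℝ) L, ENNReal.ofReal (CG * M ^ 2 * ‖f‖ ^ 2) :=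
          lintegral_mono_ae hmono
      _ = ENNReal.ofReal (CG * M ^ 2 * ‖f‖ ^ 2) * ENNReal.ofReal L := by
          rw [setLIntegral_const, Real.volume_Ioc, sub_zero]
  have hfinal : ENNReal.ofReal (∑' i, ∫ t in (0:ℝ)..L, F i t)
      ≤ ENNReal.ofReal (CG * M ^ 2 * L * ‖f‖ ^ 2) := by
    rw [hofsum, hswap]
    refine hbd.trans (le_of_eq ?_)
    rw [← ENNReal.ofReal_mul (by positivity)]
    ring_nf
  have := (ENNReal.ofReal_le_ofReal_iff (by positivity)).1 hfinal
  exact this
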